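/- Let N ≥ 4 be even and let p be the completely randomized design with equal group sizes. For each unit i and assignment w define θ̂_{(−i)}(w) = (1/(N/2 − 1))·Σ_{j ≠ i} w_j·y_j(w) − (2/N)·Σ_{j ≠ i} (1 − w_j)·y_j(w) if w_i = 1, and θ̂_{(−i)}(w) = (2/N)·Σ_{j ≠ i} w_j·y_j(w) − (1/(N/2 − 1))·Σ_{j ≠ i} (1 − w_j)·y_j(w) if w_i = 0; set ĉ_i(w) = y_i(w) + (1/2 − w_i)·θ̂_{(−i)}(w) and V̂_Jack(W) = ψ(ĉ(W)). If the treatment effects are homogeneous, Y_i(1) − Y_i(0) = τ for all i, then E[V̂_Jack(W)] = ((N−1)/(N−2))·Var(τ̂). -/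

import Mathlib

open Finset

noncomputable section

/-- Expectation under the design. -/
def expct (N : ℕ) (p f : (Fin N → Bool) → ℝ) : ℝ :=
  ∑ w : Fin N → Bool, p w * f w

/-- Average treatment effect. -/
def tauATE (N : ℕ) (Y1 Y0 : Fin N → ℝ) : ℝ :=
  (1 / (N : ℝ)) * ∑ i, (Y1 i - Y0 i)

/-- Observed outcome of unit `i` under assignment `w`. -/
def yObs (N : ℕ) (Y1 Y0 : Fin N → ℝ) (w : Fin N → Bool) (i : Fin N) : ℝ :=
  if w i then Y1 i else Y0 i

/-- The HT (difference-in-means) estimator when `π_i = 1/2`. -/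
def tauDM (N : ℕ) (Y1 Y0 : Fin N → ℝ) (w : Fin N → Bool) : ℝ :=
  (2 / (N : ℝ)) * ((∑ i, if w i then yObs N Y1 Y0 w i else 0)
    - ∑ i, if w i then 0 else yObs N Y1 Y0 w i)

/-- Design-based variance of `τ̂`. -/
def varDM (N : ℕ) (p : (Fin N → Bool) → ℝ) (Y1 Y0 : Fin N → ℝ) : ℝ :=
  expct N p (fun w => (tauDM N Y1 Y0 w - tauATE N Y1 Y0) ^ 2)

/-- `ψ(x) = Σ_w p_w·((2/N)·(Σ_{w_i=1} x_i − Σ_{w_i=0} x_i))²`. -/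
def psiHalf (N : ℕ) (p : (Fin N → Bool) → ℝ) (x : Fin N → ℝ) : ℝ :=
  ∑ w : Fin N → Bool, p w *
    ((2 / (N : ℝ)) * ((∑ i, if w i then x i else 0) - ∑ i, if w i then 0 else x i)) ^ 2

/-- The treated set `T(w)`. -/
def Tset (N : ℕ) (w : Fin N → Bool) : Finset (Fin N) :=
  univ.filter fun i => w i = true

/-- Completely randomized design with equal group sizes. -/
def crd (N : ℕ) (w : Fin N → Bool) : ℝ :=
  if (Tset N w).card = N / 2 then (1 : ℝ) / (N.choose (N / 2)) else 0

/-- The leave-one-out (jackknifed) difference-in-means estimator under the CRD with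
equal group sizes, with inverse weights adjusted by the treatment status of unit `i`. -/
def thetaJackCRD (N : ℕ) (Y1 Y0 : Fin N → ℝ) (i : Fin N) (w : Fin N → Bool) : ℝ :=
  if w i then
    (1 / ((N : ℝ) / 2 - 1)) * (∑ j ∈ univ.erase i, if w j then yObs N Y1 Y0 w j else 0)
      - (2 / (N : ℝ)) * (∑ j ∈ univ.erase i, if w j then 0 else yObs N Y1 Y0 w j)
  else
    (2 / (N : ℝ)) * (∑ j ∈ univ.erase i, if w j then yObs N Y1 Y0 w j else 0)
      - (1 / ((N : ℝ) / 2 - 1)) * (∑ j ∈ univ.erase i, if w j then 0 else yObs N Y1 Y0 w j)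

/-- The jackknife direct-imputation variance estimator
`V̂_Jack(W) = ψ(ĉ(W))` with `ĉ_i(W) = y_i(W) + (1/2 − W_i)·θ̂_{(−i)}(W)`. -/
def VJack (N : ℕ) (Y1 Y0 : Fin N → ℝ) (W : Fin N → Bool) : ℝ :=
  psiHalf N (crd N)
    (fun i => yObs N Y1 Y0 W i
      + (1 / 2 - (if W i then (1 : ℝ) else 0)) * thetaJackCRD N Y1 Y0 i W)

def sgnJ (N : ℕ) (w : Fin N → Bool) (i : Fin N) : ℝ := if w i then 1 else -1


lemma sum_crd_ind (N : ℕ) (q : (Fin N → Bool) → Prop) [DecidablePred q] :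
    ∑ w : Fin N → Bool, crd N w * (if q w then (1:ℝ) else 0)
      = ((univ.filter fun w : Fin N → Bool =>
          ((univ.filter fun i => w i = true).card = N/2 ∧ q w)).card : ℝ) / (N.choose (N/2)) := by
  have h : ∀ w : Fin N → Bool, crd N w * (if q w then (1:ℝ) else 0)
      = if ((univ.filter fun i => w i = true).card = N/2 ∧ q w)
        then (1:ℝ)/(N.choose (N/2)) else 0 := by
    intro w
    unfold crd Tset
    by_cases h1 : (univ.filter fun i => w i = true).card = N/2 <;>
      by_cases h2 : q w <;> simp [h1, h2]
  rw [Finset.sum_congr rfl (fun w _ => h w), ← Finset.sum_filter]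
  rw [Finset.sum_const, nsmul_eq_mul]
  ring


lemma countJ (N m : ℕ) (t : Finset (Fin N)) (ht : t.card ≤ m) :
    (univ.filter fun w : Fin N → Bool =>
      (univ.filter fun i => w i = true).card = m ∧ ∀ i ∈ t, w i = true).card
      = (N - t.card).choose (m - t.card) := by
  have hcompl : (tᶜ : Finset (Fin N)).card = N - t.card := by
    rw [Finset.card_compl, Fintype.card_fin]
  rw [← hcompl, ← Finset.card_powersetCard]
  apply Finset.card_nbij' (i := fun w => (univ.filter fun i => w i = true) \ t)
    (j := fun s => fun j => decide (j ∈ s ∪ t))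
  · intro w hw
    simp only [Finset.mem_coe, mem_filter, mem_univ, true_and] at hw
    obtain ⟨hcard, hsub⟩ := hw
    have htsub : t ⊆ univ.filter fun i => w i = true := by
      intro i hi; simp [hsub i hi]
    simp only [Finset.mem_coe, mem_powersetCard]
    constructor
    · intro x hx
      simp only [mem_sdiff, mem_filter] at hx ⊢
      simp [mem_compl, hx.2]
    · rw [card_sdiff_of_subset htsub, hcard]
  · intro s hs
    simp only [Finset.mem_coe, mem_powersetCard] at hs
    obtain ⟨hsub, hcard⟩ := hs
    have hdisj : Disjoint s t := by
      intro u hus hut x hx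
      have := hsub (hus hx)
      simp only [mem_compl] at this
      exact absurd (hut hx) this
    simp only [Finset.mem_coe, mem_filter, mem_univ, true_and]
    constructor
    · have : (univ.filter fun i => decide (i ∈ s ∪ t) = true) = s ∪ t := by
        ext x; simp
      rw [this, card_union_of_disjoint hdisj, hcard]
      omega
    · intro i hi; simp [Finset.mem_union, hi]
  · intro w hw
    simp only [Finset.mem_coe, mem_filter, mem_univ, true_and] at hw
    funext j
    by_cases h : w j = true
    · by_cases hj : j ∈ t <;> simp [hj, h, Finset.mem_union, Finset.mem_sdiff]
    · simp only [Bool.not_eq_true] at h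
      have hjt : j ∉ t := fun hj => by simp [hw.2 j hj] at h
      simp [h, Finset.mem_union, Finset.mem_sdiff, hjt]
  · intro s hs
    simp only [Finset.mem_coe, mem_powersetCard] at hs
    have hdisj : ∀ x ∈ s, x ∉ t := by
      intro x hx
      have := hs.1 hx; simp only [mem_compl] at this; exact this
    ext x
    simp only [mem_sdiff, mem_filter, mem_univ, true_and, decide_eq_true_eq, Finset.mem_union]
    constructor
    · rintro ⟨h | h, hxt⟩
      · exact h
      · exact absurd h hxt
    · intro hx; exact ⟨Or.inl hx, hdisj x hx⟩


lemma choose_ne (N : ℕ) : ((N.choose (N/2) : ℝ)) ≠ 0 := by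
  have := Nat.choose_pos (Nat.div_le_self N 2)
  positivity


lemma sum_crd_one (N : ℕ) : ∑ w : Fin N → Bool, crd N w = 1 := by
  have h := sum_crd_ind N (fun _ => True)
  simp only [if_true, mul_one, and_true] at h
  rw [h]
  have hc := countJ N (N/2) ∅ (Nat.zero_le _)
  simp only [Finset.card_empty, Nat.sub_zero] at hc
  have he : (univ.filter fun w : Fin N → Bool =>
      (univ.filter fun i => w i = true).card = N/2)
      = (univ.filter fun w : Fin N → Bool =>
      (univ.filter fun i => w i = true).card = N/2 ∧ ∀ i ∈ (∅ : Finset (Fin N)), w i = true) := by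
    apply Finset.filter_congr
    intro w _; simp
  rw [he, hc]
  exact div_self (choose_ne N)



lemma chooseKey (k : ℕ) :
    (2*k+4) * ((2*k+4).choose (k+2)) = 4*(2*k+3)*((2*k+2).choose (k+1)) := by
  have hsymm : (2*k+3).choose (k+1) = (2*k+3).choose (k+2) := by
    have h := Nat.choose_symm (n := 2*k+3) (k := k+2) (by omega)
    have h2 : 2*k+3-(k+2) = k+1 := by omega
    rw [h2] at h
    exact h
  have hpascal : (2*k+4).choose (k+2) = (2*k+3).choose (k+1) + (2*k+3).choose (k+2) :=
    Nat.choose_succ_succ' (2*k+3) (k+1)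
  have hmul : (2*k+3) * ((2*k+2).choose (k+1)) = (2*k+3).choose (k+2) * (k+2) :=
    Nat.add_one_mul_choose_eq (2*k+2) (k+1)
  rw [hpascal, ← hsymm]
  nlinarith [hmul, hsymm]


lemma T_offdiag (N : ℕ) (hN : 4 ≤ N) (hEven : 2 ∣ N) (i j : Fin N) (hij : i ≠ j) :
    ∑ w : Fin N → Bool, crd N w * (sgnJ N w i * sgnJ N w j) = -1/((N:ℝ)-1) := by
  obtain ⟨k, hNk⟩ : ∃ k, N = 2*k + 4 := by
    obtain ⟨m, hm⟩ := hEven; exact ⟨m - 2, by omega⟩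
  have hN2 : N/2 = k+2 := by omega
  have hle2 : 2 ≤ N/2 := by omega
  have hle1 : 1 ≤ N/2 := by omega
  have e1a : N - 2 = 2*k+2 := by omega
  have e2a : N/2 - 2 = k := by omega
  have e1b : N - 1 = 2*k+3 := by omega
  have e2b : N/2 - 1 = k+1 := by omega
  -- decompose the sign product into indicators
  have hdec : ∀ w : Fin N → Bool, sgnJ N w i * sgnJ N w j
      = 4*(if (w i = true ∧ w j = true) then (1:ℝ) else 0)
        - 2*(if w i = true then (1:ℝ) else 0)
        - 2*(if w j = true then (1:ℝ) else 0) + 1 := by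
    intro w
    unfold sgnJ
    cases h1 : w i <;> cases h2 : w j <;> norm_num [h1, h2]
  have hsplit : ∑ w : Fin N → Bool, crd N w * (sgnJ N w i * sgnJ N w j)
      = 4*(∑ w : Fin N → Bool, crd N w * (if (w i = true ∧ w j = true) then (1:ℝ) else 0))
        - 2*(∑ w : Fin N → Bool, crd N w * (if w i = true then (1:ℝ) else 0))
        - 2*(∑ w : Fin N → Bool, crd N w * (if w j = true then (1:ℝ) else 0))
        + ∑ w : Fin N → Bool, crd N w := by
    rw [Finset.mul_sum, Finset.mul_sum, Finset.mul_sum, ← Finset.sum_sub_distrib,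
      ← Finset.sum_sub_distrib, ← Finset.sum_add_distrib]
    exact Finset.sum_congr rfl fun w _ => by rw [hdec w]; ring
  -- counts
  have hijcard : ({i, j} : Finset (Fin N)).card = 2 := by
    rw [Finset.card_insert_of_notMem (by simp [hij]), Finset.card_singleton]
  have hcnt2 : (univ.filter fun w : Fin N → Bool =>
      ((univ.filter fun l => w l = true).card = N/2 ∧ (w i = true ∧ w j = true))).card
      = (2*k+2).choose k := by
    have hc := countJ N (N/2) {i, j} (by rw [hijcard]; exact hle2)
    rw [hijcard] at hc
    have he : (univ.filter fun w : Fin N → Bool =>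
        ((univ.filter fun l => w l = true).card = N/2 ∧ (w i = true ∧ w j = true)))
        = (univ.filter fun w : Fin N → Bool =>
        ((univ.filter fun l => w l = true).card = N/2 ∧ ∀ l ∈ ({i, j} : Finset (Fin N)), w l = true)) := by
      apply Finset.filter_congr
      intro w _
      constructor
      · rintro ⟨h1, h2, h3⟩
        refine ⟨h1, ?_⟩
        intro l hl
        rcases Finset.mem_insert.1 hl with rfl | hl
        · exact h2
        · rw [Finset.mem_singleton] at hl; subst hl; exact h3
      · rintro ⟨h1, h⟩
        exact ⟨h1, h i (by simp), h j (by simp)⟩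
    rw [he, hc, e1a, e2a]
  have hcnt1 : ∀ l : Fin N, (univ.filter fun w : Fin N → Bool =>
      ((univ.filter fun l' => w l' = true).card = N/2 ∧ w l = true)).card
      = (2*k+3).choose (k+1) := by
    intro l
    have hc := countJ N (N/2) {l} (by rw [Finset.card_singleton]; exact hle1)
    simp only [Finset.card_singleton] at hc
    have he : (univ.filter fun w : Fin N → Bool =>
        ((univ.filter fun l' => w l' = true).card = N/2 ∧ w l = true))
        = (univ.filter fun w : Fin N → Bool =>
        ((univ.filter fun l' => w l' = true).card = N/2 ∧ ∀ l' ∈ ({l} : Finset (Fin N)), w l' = true)) := by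
      apply Finset.filter_congr
      intro w _
      simp
    rw [he, hc, e1b, e2b]
  rw [hsplit, sum_crd_one N, sum_crd_ind N (fun w => (w i = true ∧ w j = true)),
    sum_crd_ind N (fun w => w i = true), sum_crd_ind N (fun w => w j = true),
    hcnt2, hcnt1 i, hcnt1 j]
  -- now pure arithmetic with the choose identities
  have hpascal : ((2*k+3).choose (k+1) : ℝ)
      = ((2*k+2).choose k : ℝ) + ((2*k+2).choose (k+1) : ℝ) := by
    have := Nat.choose_succ_succ' (2*k+2) k
    push_cast [this]; ring
  have hkey : ((N:ℝ)) * ((N.choose (N/2) : ℝ)) = 4*((N:ℝ)-1)*((2*k+2).choose (k+1) : ℝ) := by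
    have h := chooseKey k
    have hNc : N.choose (N/2) = (2*k+4).choose (k+2) := by rw [hN2, hNk]
    have h' : ((2*k+4 : ℕ) : ℝ) * (((2*k+4).choose (k+2) : ℕ) : ℝ)
        = ((4*(2*k+3) : ℕ) : ℝ) * (((2*k+2).choose (k+1) : ℕ) : ℝ) := by
      exact_mod_cast h
    have hNr : (N:ℝ) = 2*(k:ℝ)+4 := by rw [hNk]; push_cast; ring
    rw [hNc, hNr]
    push_cast at h'
    linarith
  have hne : ((N.choose (N/2) : ℝ)) ≠ 0 := choose_ne N
  have hn1 : ((N:ℝ)) - 1 ≠ 0 := by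
    have : (4:ℝ) ≤ (N:ℝ) := by exact_mod_cast hN
    nlinarith
  field_simp
  nlinarith [hpascal, hkey]


lemma T_diag (N : ℕ) (i : Fin N) :
    ∑ w : Fin N → Bool, crd N w * (sgnJ N w i * sgnJ N w i) = 1 := by
  have h : ∀ w : Fin N → Bool, sgnJ N w i * sgnJ N w i = 1 := by
    intro w; unfold sgnJ; cases h : w i <;> norm_num [h]
  calc ∑ w : Fin N → Bool, crd N w * (sgnJ N w i * sgnJ N w i)
      = ∑ w : Fin N → Bool, crd N w := Finset.sum_congr rfl fun w _ => by rw [h w, mul_one]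
    _ = 1 := sum_crd_one N


lemma momentJ (N : ℕ) (hN : 4 ≤ N) (hEven : 2 ∣ N) (x : Fin N → ℝ) :
    ∑ w : Fin N → Bool, crd N w * (∑ i, sgnJ N w i * x i)^2
      = ((N:ℝ) * (∑ i, (x i)^2) - (∑ i, x i)^2) / ((N:ℝ)-1) := by
  have hn1 : ((N:ℝ)) - 1 ≠ 0 := by
    have : (4:ℝ) ≤ (N:ℝ) := by exact_mod_cast hN
    nlinarith
  have step1 : ∑ w : Fin N → Bool, crd N w * (∑ i, sgnJ N w i * x i)^2
      = ∑ i, ∑ j, (x i * x j) * (∑ w : Fin N → Bool, crd N w * (sgnJ N w i * sgnJ N w j)) := by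
    have hper : ∀ w : Fin N → Bool, crd N w * (∑ i, sgnJ N w i * x i)^2
        = ∑ i, ∑ j, (x i * x j) * (crd N w * (sgnJ N w i * sgnJ N w j)) := by
      intro w
      rw [sq, Finset.sum_mul_sum, Finset.mul_sum]
      refine Finset.sum_congr rfl fun i _ => ?_
      rw [Finset.mul_sum]
      exact Finset.sum_congr rfl fun j _ => by ring
    rw [Finset.sum_congr rfl fun w _ => hper w, Finset.sum_comm]
    refine Finset.sum_congr rfl fun i _ => ?_
    rw [Finset.sum_comm]
    refine Finset.sum_congr rfl fun j _ => ?_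
    rw [← Finset.mul_sum]
  rw [step1]
  have hT : ∀ i j : Fin N, (∑ w : Fin N → Bool, crd N w * (sgnJ N w i * sgnJ N w j))
      = if i = j then 1 else -1/((N:ℝ)-1) := by
    intro i j
    by_cases h : i = j
    · subst h; rw [if_pos rfl]; exact T_diag N i
    · rw [if_neg h]; exact T_offdiag N hN hEven i j h
  have step2 : ∀ i : Fin N, ∑ j, (x i * x j) * (∑ w : Fin N → Bool, crd N w * (sgnJ N w i * sgnJ N w j))
      = (-1/((N:ℝ)-1)) * (x i * ∑ j, x j) + (1 - (-1/((N:ℝ)-1))) * (x i)^2 := by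
    intro i
    have hper : ∀ j : Fin N, (x i * x j) * (∑ w : Fin N → Bool, crd N w * (sgnJ N w i * sgnJ N w j))
        = (-1/((N:ℝ)-1)) * (x i * x j)
          + (if j = i then (1 - (-1/((N:ℝ)-1))) * (x i * x j) else 0) := by
      intro j
      rw [hT i j]
      by_cases h : j = i
      · subst h; rw [if_pos rfl, if_pos rfl]; ring
      · rw [if_neg (fun hh => h hh.symm), if_neg h]; ring
    rw [Finset.sum_congr rfl fun j _ => hper j, Finset.sum_add_distrib,
      Finset.sum_ite_eq' univ i (fun j => (1 - (-1/((N:ℝ)-1))) * (x i * x j)),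
      if_pos (Finset.mem_univ i), ← Finset.mul_sum, ← Finset.mul_sum]
    ring
  rw [Finset.sum_congr rfl fun i _ => step2 i, Finset.sum_add_distrib,
    ← Finset.mul_sum, ← Finset.mul_sum, ← Finset.sum_mul]
  field_simp
  ring


lemma psiJ (N : ℕ) (hN : 4 ≤ N) (hEven : 2 ∣ N) (x : Fin N → ℝ) :
    psiHalf N (crd N) x
      = (4/((N:ℝ)^2)) * (((N:ℝ) * (∑ i, (x i)^2) - (∑ i, x i)^2) / ((N:ℝ)-1)) := by
  unfold psiHalf
  have hLw : ∀ w : Fin N → Bool,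
      (∑ i, if w i then x i else 0) - (∑ i, if w i then 0 else x i)
        = ∑ i, sgnJ N w i * x i := by
    intro w
    rw [← Finset.sum_sub_distrib]
    refine Finset.sum_congr rfl fun i _ => ?_
    unfold sgnJ; cases h : w i <;> simp [h]
  calc ∑ w : Fin N → Bool, crd N w *
        ((2 / (N : ℝ)) * ((∑ i, if w i then x i else 0) - ∑ i, if w i then 0 else x i)) ^ 2
      = ∑ w : Fin N → Bool, (4/((N:ℝ)^2)) * (crd N w * (∑ i, sgnJ N w i * x i)^2) := by
        refine Finset.sum_congr rfl fun w _ => ?_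
        rw [hLw w]; ring
    _ = (4/((N:ℝ)^2)) * (((N:ℝ) * (∑ i, (x i)^2) - (∑ i, x i)^2) / ((N:ℝ)-1)) := by
        rw [← Finset.mul_sum, momentJ N hN hEven x]


lemma crd_congr (N : ℕ) (f g : (Fin N → Bool) → ℝ)
    (h : ∀ w, (Tset N w).card = N/2 → f w = g w) :
    ∑ w : Fin N → Bool, crd N w * f w = ∑ w : Fin N → Bool, crd N w * g w := by
  refine Finset.sum_congr rfl fun w _ => ?_
  by_cases hb : (Tset N w).card = N/2
  · rw [h w hb]
  · unfold crd; rw [if_neg hb, zero_mul, zero_mul]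


lemma castHalfJ (N : ℕ) (hEven : 2 ∣ N) : ((N/2 : ℕ) : ℝ) = (N:ℝ)/2 := by
  obtain ⟨m, rfl⟩ := hEven
  rw [Nat.mul_div_cancel_left m (by norm_num)]
  push_cast; ring


lemma hb1J (N : ℕ) (hEven : 2 ∣ N) (w : Fin N → Bool) (hbal : (Tset N w).card = N/2) :
    ∑ i, (if w i then (1:ℝ) else 0) = (N:ℝ)/2 := by
  rw [Finset.sum_boole]
  have : (univ.filter fun i => w i) = Tset N w := by
    unfold Tset; apply Finset.filter_congr; intro i _; simp
  rw [this, hbal, castHalfJ N hEven]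


lemma hb2J (N : ℕ) (hEven : 2 ∣ N) (w : Fin N → Bool) (hbal : (Tset N w).card = N/2) :
    ∑ i, sgnJ N w i = 0 := by
  have h : ∀ i, sgnJ N w i = 2*(if w i then (1:ℝ) else 0) - 1 := by
    intro i; unfold sgnJ; cases h : w i <;> norm_num [h]
  rw [Finset.sum_congr rfl fun i _ => h i, Finset.sum_sub_distrib, ← Finset.mul_sum,
    hb1J N hEven w hbal, Finset.sum_const, Finset.card_univ, Fintype.card_fin,
    nsmul_eq_mul, mul_one]
  ring


lemma hDsJ (N : ℕ) (Y0 : Fin N → ℝ) (w : Fin N → Bool) :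
    ∑ i, sgnJ N w i * Y0 i
      = (∑ i, if w i then Y0 i else 0) - (∑ i, if w i then 0 else Y0 i) := by
  rw [← Finset.sum_sub_distrib]
  refine Finset.sum_congr rfl fun i _ => ?_
  unfold sgnJ; cases h : w i <;> simp [h]


lemma hytJ (N : ℕ) (hEven : 2 ∣ N) (Y1 Y0 : Fin N → ℝ)
    (hhom : ∀ i, Y1 i - Y0 i = tauATE N Y1 Y0)
    (w : Fin N → Bool) (hbal : (Tset N w).card = N/2) :
    ∑ j, (if w j then yObs N Y1 Y0 w j else 0)
      = (∑ i, if w i then Y0 i else 0) + ((N:ℝ)/2) * tauATE N Y1 Y0 := by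
  have h : ∀ j, (if w j then yObs N Y1 Y0 w j else 0)
      = (if w j then Y0 j else 0) + tauATE N Y1 Y0 * (if w j then (1:ℝ) else 0) := by
    intro j
    unfold yObs
    cases h : w j
    · simp [h]
    · simp only [h, if_true]
      have := hhom j; linarith
  rw [Finset.sum_congr rfl fun j _ => h j, Finset.sum_add_distrib, ← Finset.mul_sum,
    hb1J N hEven w hbal]
  ring


lemma hycJ (N : ℕ) (Y1 Y0 : Fin N → ℝ) (w : Fin N → Bool) :
    ∑ j, (if w j then 0 else yObs N Y1 Y0 w j) = ∑ i, if w i then 0 else Y0 i := by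
  refine Finset.sum_congr rfl fun j _ => ?_
  unfold yObs; cases h : w j <;> simp [h]


lemma pointJ (N : ℕ) (hN : 4 ≤ N) (hEven : 2 ∣ N) (Y1 Y0 : Fin N → ℝ)
    (hhom : ∀ i, Y1 i - Y0 i = tauATE N Y1 Y0)
    (w : Fin N → Bool) (hbal : (Tset N w).card = N/2) :
    (N:ℝ) * (∑ i, (yObs N Y1 Y0 w i
        + (1/2 - (if w i then (1:ℝ) else 0)) * thetaJackCRD N Y1 Y0 i w)^2)
      - (∑ i, (yObs N Y1 Y0 w i
        + (1/2 - (if w i then (1:ℝ) else 0)) * thetaJackCRD N Y1 Y0 i w))^2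
    = (((N:ℝ)-1)/((N:ℝ)-2))^2 *
        ((N:ℝ) * (∑ i, (Y0 i)^2) - (∑ i, Y0 i)^2 - (∑ i, sgnJ N w i * Y0 i)^2) := by
  have hn4 : (4:ℝ) ≤ (N:ℝ) := by exact_mod_cast hN
  have hne : (N:ℝ) ≠ 0 := by nlinarith
  have h2ne : (N:ℝ) - 2 ≠ 0 := by nlinarith
  have hhalf : (N:ℝ)/2 - 1 ≠ 0 := by intro h; apply h2ne; linarith
  set t := tauATE N Y1 Y0 with ht
  have hY1 : ∀ i, Y1 i = Y0 i + t := fun i => by have := hhom i; linarith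
  set lam : ℝ := ((N:ℝ)-1)/((N:ℝ)-2) with hlam
  set S1 : ℝ := ∑ i, if w i then Y0 i else 0 with hS1
  set S0 : ℝ := ∑ i, if w i then 0 else Y0 i with hS0
  set G : ℝ := t/2 + (S1+S0)/(2*(N:ℝ)) - (S1+S0)/(2*((N:ℝ)-2)) with hG
  set Dl : ℝ := -(lam*(S1-S0)/(N:ℝ)) with hDl
  have hyt := hytJ N hEven Y1 Y0 hhom w hbal
  have hyc := hycJ N Y1 Y0 w
  rw [← ht, ← hS1] at hyt
  rw [← hS0] at hyc
  -- the per-unit representation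
  have hch : ∀ i, yObs N Y1 Y0 w i
      + (1/2 - (if w i then (1:ℝ) else 0)) * thetaJackCRD N Y1 Y0 i w
      = lam * Y0 i + G + sgnJ N w i * Dl := by
    intro i
    unfold thetaJackCRD sgnJ
    rw [Finset.sum_erase_eq_sub (Finset.mem_univ i), Finset.sum_erase_eq_sub (Finset.mem_univ i),
      hyt, hyc]
    cases h : w i
    · simp only [h, if_false, Bool.false_eq_true]
      unfold yObs
      simp only [h, if_false, Bool.false_eq_true]
      rw [hG, hDl, hlam]
      field_simp
      ring
    · simp only [h, if_true]
      unfold yObs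
      simp only [h, if_true]
      rw [hY1 i, hG, hDl, hlam]
      field_simp
      ring
  have hb2 := hb2J N hEven w hbal
  have hDs := hDsJ N Y0 w
  rw [← hS1, ← hS0] at hDs
  -- sum of the representation
  have hsm : ∑ i, (lam * Y0 i + G + sgnJ N w i * Dl)
      = lam * (∑ i, Y0 i) + (N:ℝ) * G := by
    rw [Finset.sum_add_distrib, Finset.sum_add_distrib, ← Finset.mul_sum, ← Finset.sum_mul,
      hb2, Finset.sum_const, Finset.card_univ, Fintype.card_fin, nsmul_eq_mul]
    ring
  -- sum of squares of the representation
  have hsq : ∑ i, (lam * Y0 i + G + sgnJ N w i * Dl)^2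
      = lam^2 * (∑ i, (Y0 i)^2) + 2*lam*G*(∑ i, Y0 i) + 2*lam*Dl*(S1 - S0)
        + (N:ℝ)*(G^2 + Dl^2) := by
    have hexp : ∀ i, (lam * Y0 i + G + sgnJ N w i * Dl)^2
        = lam^2 * (Y0 i)^2 + 2*lam*G*(Y0 i) + 2*lam*Dl*(sgnJ N w i * Y0 i)
          + 2*G*Dl*(sgnJ N w i) + (G^2 + Dl^2) := by
      intro i
      unfold sgnJ
      cases h : w i <;> simp only [h, if_true, if_false, Bool.false_eq_true] <;> ring
    rw [Finset.sum_congr rfl fun i _ => hexp i, Finset.sum_add_distrib,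
      Finset.sum_add_distrib, Finset.sum_add_distrib, Finset.sum_add_distrib,
      ← Finset.mul_sum, ← Finset.mul_sum, ← Finset.mul_sum, ← Finset.mul_sum,
      hDs, hb2, Finset.sum_const, Finset.card_univ, Fintype.card_fin, nsmul_eq_mul]
    ring
  have e1 : (∑ i, (yObs N Y1 Y0 w i
      + (1/2 - (if w i then (1:ℝ) else 0)) * thetaJackCRD N Y1 Y0 i w))
      = lam * (∑ i, Y0 i) + (N:ℝ) * G :=
    (Finset.sum_congr rfl fun i _ => hch i).trans hsm
  have e2 : (∑ i, (yObs N Y1 Y0 w i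
      + (1/2 - (if w i then (1:ℝ) else 0)) * thetaJackCRD N Y1 Y0 i w)^2)
      = lam^2 * (∑ i, (Y0 i)^2) + 2*lam*G*(∑ i, Y0 i) + 2*lam*Dl*(S1 - S0)
        + (N:ℝ)*(G^2 + Dl^2) :=
    (Finset.sum_congr rfl fun i _ => by rw [hch i]).trans hsq
  rw [e1, e2, hDs, hDl]
  field_simp
  ring


/-- Theorem 4: under the CRD with equal group sizes and homogeneous treatment
effects, `E[V̂_Jack(W)] = ((N−1)/(N−2))·Var(τ̂)`. -/
theorem jackknife_bias_crd
    (N : ℕ) (hN : 4 ≤ N) (hEven : 2 ∣ N)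
    (Y1 Y0 : Fin N → ℝ)
    (hhom : ∀ i, Y1 i - Y0 i = tauATE N Y1 Y0) :
    expct N (crd N) (VJack N Y1 Y0)
      = (((N : ℝ) - 1) / ((N : ℝ) - 2)) * varDM N (crd N) Y1 Y0 := by
  have hn4 : (4:ℝ) ≤ (N:ℝ) := by exact_mod_cast hN
  have hne : (N:ℝ) ≠ 0 := by nlinarith
  have h1ne : (N:ℝ) - 1 ≠ 0 := by nlinarith
  have h2ne : (N:ℝ) - 2 ≠ 0 := by nlinarith
  have hmom := momentJ N hN hEven Y0
  have hLHS : expct N (crd N) (VJack N Y1 Y0)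
      = (4/((N:ℝ)^2)) * ((((N:ℝ)-1)/((N:ℝ)-2))^2
          * (((N:ℝ)*(∑ i, (Y0 i)^2) - (∑ i, Y0 i)^2)
            - ((N:ℝ)*(∑ i, (Y0 i)^2) - (∑ i, Y0 i)^2)/((N:ℝ)-1)) / ((N:ℝ)-1)) := by
    unfold expct
    calc ∑ w : Fin N → Bool, crd N w * VJack N Y1 Y0 w
        = ∑ w : Fin N → Bool, crd N w * ((4/((N:ℝ)^2)) * ((((N:ℝ)-1)/((N:ℝ)-2))^2
            * ((N:ℝ)*(∑ i, (Y0 i)^2) - (∑ i, Y0 i)^2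
              - (∑ i, sgnJ N w i * Y0 i)^2) / ((N:ℝ)-1))) := by
          apply crd_congr
          intro w hbal
          unfold VJack
          rw [psiJ N hN hEven, pointJ N hN hEven Y1 Y0 hhom w hbal]
      _ = ∑ w : Fin N → Bool,
            ((4/((N:ℝ)^2)) * ((((N:ℝ)-1)/((N:ℝ)-2))^2/((N:ℝ)-1))
              * ((N:ℝ)*(∑ i, (Y0 i)^2) - (∑ i, Y0 i)^2) * crd N w
            - (4/((N:ℝ)^2)) * ((((N:ℝ)-1)/((N:ℝ)-2))^2/((N:ℝ)-1))
              * (crd N w * (∑ i, sgnJ N w i * Y0 i)^2)) := by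
          refine Finset.sum_congr rfl fun w _ => ?_
          ring
      _ = (4/((N:ℝ)^2)) * ((((N:ℝ)-1)/((N:ℝ)-2))^2/((N:ℝ)-1))
              * ((N:ℝ)*(∑ i, (Y0 i)^2) - (∑ i, Y0 i)^2) * (∑ w : Fin N → Bool, crd N w)
            - (4/((N:ℝ)^2)) * ((((N:ℝ)-1)/((N:ℝ)-2))^2/((N:ℝ)-1))
              * (∑ w : Fin N → Bool, crd N w * (∑ i, sgnJ N w i * Y0 i)^2) := by
          rw [Finset.sum_sub_distrib, ← Finset.mul_sum, ← Finset.mul_sum]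
      _ = _ := by
          rw [sum_crd_one N, hmom]
          field_simp
  have hdm : ∀ w : Fin N → Bool, (Tset N w).card = N/2 →
      (tauDM N Y1 Y0 w - tauATE N Y1 Y0)^2
        = (4/((N:ℝ)^2)) * (∑ i, sgnJ N w i * Y0 i)^2 := by
    intro w hbal
    have h : tauDM N Y1 Y0 w - tauATE N Y1 Y0
        = (2/(N:ℝ)) * (∑ i, sgnJ N w i * Y0 i) := by
      unfold tauDM
      rw [hytJ N hEven Y1 Y0 hhom w hbal, hycJ N Y1 Y0 w, hDsJ N Y0 w]
      field_simp
      ring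
    rw [h]
    ring
  have hRHS : varDM N (crd N) Y1 Y0
      = (4/((N:ℝ)^2)) * (((N:ℝ)*(∑ i, (Y0 i)^2) - (∑ i, Y0 i)^2)/((N:ℝ)-1)) := by
    unfold varDM expct
    calc ∑ w : Fin N → Bool, crd N w * (tauDM N Y1 Y0 w - tauATE N Y1 Y0)^2
        = ∑ w : Fin N → Bool, crd N w
            * ((4/((N:ℝ)^2)) * (∑ i, sgnJ N w i * Y0 i)^2) := crd_congr N _ _ hdm
      _ = ∑ w : Fin N → Bool, (4/((N:ℝ)^2))
            * (crd N w * (∑ i, sgnJ N w i * Y0 i)^2) := by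
          refine Finset.sum_congr rfl fun w _ => ?_; ring
      _ = _ := by rw [← Finset.mul_sum, hmom]
  rw [hLHS, hRHS]
  field_simp
  ring
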